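/- arXiv:1511.05243 — 2 statements merged into one kernel-verified Lean document; each statement's English description precedes it below -/
import Mathlib

section
/- Let g be a semisimple Lie algebra over ℝ with Killing form B, σ an involution with (−1)-eigenspace q, X ∈ q, and ξ ∈ q with [ξ, X] = 0. Suppose ξ = ξ_s + ξ_n is the Jordan–Chevalley decomposition and there exists Z ∈ h (= (+1)-eigenspace of σ) with [Z, ξ_n] = ξ_n. Then B(ξ_n, X) = 0. -/
/-- Real semisimple Lie algebra `L` with Killing form `B`, involution `σ`
with `(-1)`-eigenspace `q`; `X ∈ q`, `ξ ∈ q` with `[ξ, X] = 0`; if `ξ = ξs + ξn` is the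
Jordan–Chevalley decomposition and there is `Z` in the `(+1)`-eigenspace `h` with
`[Z, ξn] = ξn`, then `B(ξn, X) = 0`. -/
theorem stmt3 (L : Type*) [LieRing L] [LieAlgebra ℝ L] [FiniteDimensional ℝ L]
    [LieAlgebra.IsSemisimple ℝ L]
    (σ : L →ₗ⁅ℝ⁆ L) (hσ : ∀ x, σ (σ x) = x)
    (X ξ ξs ξn Z : L)
    (hX : σ X = -X) (hξ : σ ξ = -ξ) (hcomm : ⁅ξ, X⁆ = 0)
    (hsum : ξ = ξs + ξn)
    (hs : (LieAlgebra.ad ℝ L ξs).IsSemisimple)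
    (hn : IsNilpotent (LieAlgebra.ad ℝ L ξn))
    (hsn : ⁅ξs, ξn⁆ = 0)
    (hZ : σ Z = Z) (hZn : ⁅Z, ξn⁆ = ξn) :
    killingForm ℝ L ξn X = 0 := by
  -- Key step: `⁅ξn, X⁆ = 0`.
  -- The kernel `p` of `ad ξ` is invariant under `ad ξs` and `ad ξn`, and on `p`
  -- we have `ad ξs = - ad ξn`, so the restriction of `ad ξn` to `p` is both
  -- nilpotent and semisimple, hence zero.
  have hns : ⁅ξn, ξs⁆ = 0 := by rw [← lie_skew, hsn, neg_zero]
  set p : Submodule ℝ L := LinearMap.ker (LieAlgebra.ad ℝ L ξ) with hp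
  have hinv : ∀ y : L, ⁅ξ, y⁆ = 0 → p ∈ Module.End.invtSubmodule (LieAlgebra.ad ℝ L y) := by
    intro y hy
    rw [Module.End.mem_invtSubmodule]
    intro x hx
    simp only [hp, Submodule.mem_comap, LinearMap.mem_ker, LieAlgebra.ad_apply] at hx ⊢
    rw [leibniz_lie, hx, lie_zero, hy, zero_lie, add_zero]
  have hsξ : ⁅ξ, ξs⁆ = 0 := by rw [hsum, add_lie, lie_self, zero_add, hns]
  have hnξ : ⁅ξ, ξn⁆ = 0 := by rw [hsum, add_lie, lie_self, add_zero, hsn]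
  have hinvs := hinv ξs hsξ
  have hinvn := hinv ξn hnξ
  have hfs : Module.End.IsSemisimple ((LieAlgebra.ad ℝ L ξs).restrict (p := p) (q := p) hinvs) :=
    Module.End.IsSemisimple.restrict hinvs hs
  have hfn : IsNilpotent ((LieAlgebra.ad ℝ L ξn).restrict (p := p) (q := p) hinvn) :=
    Module.End.isNilpotent.restrict hinvn hn
  have hneg : (LieAlgebra.ad ℝ L ξn).restrict (p := p) (q := p) hinvn = -((LieAlgebra.ad ℝ L ξs).restrict (p := p) (q := p) hinvs) := by
    apply LinearMap.ext
    rintro ⟨x, hx⟩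
    have hx' : ⁅ξ, x⁆ = 0 := by simpa [hp, LieAlgebra.ad_apply] using hx
    have h0 : ⁅ξs, x⁆ + ⁅ξn, x⁆ = 0 := by rw [← add_lie, ← hsum, hx']
    apply Subtype.ext
    simp only [LinearMap.restrict_coe_apply, LinearMap.neg_apply, Submodule.coe_neg,
      LieAlgebra.ad_apply]
    rw [eq_neg_iff_add_eq_zero, add_comm]
    exact h0
  have hfss : Module.End.IsSemisimple ((LieAlgebra.ad ℝ L ξn).restrict (p := p) (q := p) hinvn) := by
    rw [hneg, Module.End.isSemisimple_neg]; exact hfs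
  have hzero : (LieAlgebra.ad ℝ L ξn).restrict (p := p) (q := p) hinvn = 0 :=
    Module.End.eq_zero_of_isNilpotent_isSemisimple hfn hfss
  have hXp : X ∈ p := by simpa [hp, LieAlgebra.ad_apply] using hcomm
  have hnX : ⁅ξn, X⁆ = 0 := by
    have := LinearMap.congr_fun hzero ⟨X, hXp⟩
    exact congrArg Subtype.val this
  -- Conclude using `killingForm ξn X = killingForm ⁅Z, ξn⁆ X = killingForm Z ⁅ξn, X⁆ = 0`.
  calc killingForm ℝ L ξn X = killingForm ℝ L ⁅Z, ξn⁆ X := by rw [hZn]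
    _ = killingForm ℝ L Z ⁅ξn, X⁆ := LieModule.traceForm_apply_lie_apply ℝ L L Z ξn X
    _ = 0 := by rw [hnX]; simp
end

section
/- Let R be the root system of type A_{2r-1} with simple roots α₁,…,α_{2r-1}, and let θ be the linear involution on the root lattice determined by θ(α_{2i-1}) = α_{2i-1} for 1 ≤ i ≤ r and −θ(α_{2i}) = α_{2i-1} + α_{2i} + α_{2i+1} for 1 ≤ i ≤ r−1 (with the convention making −θ preserve R). Then no root α ∈ R satisfies θ(α) = −α. -/
/-- The coordinate vector `ε_i` in `ℤ^ℕ` (indices `1, …, 2r` are used). -/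
def eps (i : ℕ) : ℕ → ℤ := fun k => if k = i then 1 else 0

/-- The fixed-point-free involution `2k-1 ↔ 2k` on the index set `{1, …, 2r}`. -/
def tauAII (k : ℕ) : ℕ := if k % 2 = 1 then k + 1 else k - 1

/-- The involution `θ` of type AII: `θ(v) = -(v ∘ τ)`, i.e. `-θ` permutes the
`ε`-coordinates by the pairing `τ : 2k-1 ↔ 2k`; it satisfies
`-θ(α_i + ⋯ + α_{j-1}) = α_{i'} + ⋯ + α_{j'-1}` on the roots `ε_i - ε_j` of
`A_{2r-1}`. -/
def thetaAII (v : ℕ → ℤ) : ℕ → ℤ := fun k => -(v (tauAII k))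

/-- In the root system of type `A_{2r-1}` (roots `ε_i - ε_j`,
`1 ≤ i ≠ j ≤ 2r`), no root `α` satisfies `θ(α) = -α` for the Satake involution data
of type AII. -/
theorem stmt10 (r : ℕ) (hr : 1 ≤ r) (i j : ℕ)
    (hi : 1 ≤ i) (hi' : i ≤ 2 * r) (hj : 1 ≤ j) (hj' : j ≤ 2 * r) (hij : i ≠ j) :
    thetaAII (eps i - eps j) ≠ -(eps i - eps j) := by
  intro h
  have h1 := congrFun h i
  simp only [thetaAII, tauAII, eps, Pi.sub_apply, Pi.neg_apply] at h1
  split_ifs at h1 <;> omega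
end
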